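/- Let v ≥ 1 be real, let 0 < β < 1/(2v) and 1 − β/2 < α < 1, and define f(v) = −log(v^{−α} − β). Then v^{−α} − β > 0, moreover 1 − f'(v)·v = ((1−α)v^{−α} − β)/(v^{−α} − β) ≤ −β/2 < 0, and f'(v)² − (2/v)f'(v) − f''(v) = α(α−1)v^{−(α+2)}/(v^{−α} − β) ≤ (3/4)(α−1)/v² < 0. -/

import Mathlib

/-- Elementary computations for `f(v) = −log(v^{−α} − β)` with
`v ≥ 1`, `0 < β < 1/(2v)` and `1 − β/2 < α < 1`. -/
theorem test_function_inverse_alpha_computations (v α β : ℝ)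
    (hv : 1 ≤ v) (hβ0 : 0 < β) (hβ : β < 1/(2*v)) (hα1 : 1 - β/2 < α) (hα2 : α < 1) :
    let f : ℝ → ℝ := fun x => -Real.log (x ^ (-α) - β)
    0 < v ^ (-α) - β ∧
    1 - deriv f v * v = ((1 - α) * v ^ (-α) - β) / (v ^ (-α) - β) ∧
    1 - deriv f v * v ≤ -β/2 ∧ -β/2 < 0 ∧
    (deriv f v) ^ 2 - (2/v) * deriv f v - deriv (deriv f) v
      = α * (α - 1) * v ^ (-(α + 2)) / (v ^ (-α) - β) ∧
    (deriv f v) ^ 2 - (2/v) * deriv f v - deriv (deriv f) v ≤ (3/4) * (α - 1) / v ^ 2 ∧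
    (3/4) * (α - 1) / v ^ 2 < 0 := by
  intro f
  have hv0 : (0:ℝ) < v := lt_of_lt_of_le one_pos hv
  have hβhalf : β < 1/2 := by
    have : 1/(2*v) ≤ 1/2 :=
      div_le_div_of_nonneg_left (by norm_num) (by norm_num) (by linarith)
    linarith
  have ha1 : v ^ (-α) ≤ 1 := Real.rpow_le_one_of_one_le_of_nonpos hv (by linarith)
  have hainv : v ^ (-(1:ℝ)) ≤ v ^ (-α) :=
    Real.rpow_le_rpow_of_exponent_le hv (by linarith)
  have hβa : β < v ^ (-α) := by
    have h1 : β < 1/v := by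
      have : 1/(2*v) < 1/v := div_lt_div_of_pos_left one_pos hv0 (by linarith)
      linarith
    rw [Real.rpow_neg_one] at hainv
    rw [← one_div] at hainv
    linarith
  have hp : 0 < v ^ (-α) - β := by linarith
  have ha0 : 0 < v ^ (-α) := Real.rpow_pos_of_pos hv0 _
  -- first derivative on a neighborhood
  have key : ∀ x : ℝ, 0 < x → 0 < x ^ (-α) - β →
      HasDerivAt f (α * (x ^ (-α - 1) / (x ^ (-α) - β))) x := by
    intro x hx hpx
    have h1 : HasDerivAt (fun y : ℝ => y ^ (-α)) (-α * x ^ (-α - 1)) x :=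
      Real.hasDerivAt_rpow_const (Or.inl hx.ne')
    have h3 : HasDerivAt (fun y : ℝ => Real.log (y ^ (-α) - β))
        ((-α * x ^ (-α - 1)) / (x ^ (-α) - β)) x := (h1.sub_const β).log hpx.ne'
    have := h3.neg
    exact this.congr_deriv (by ring)
  have hmem : ∀ᶠ x in nhds v, 0 < x ∧ 0 < x ^ (-α) - β := by
    have hc : ContinuousAt (fun x : ℝ => x ^ (-α) - β) v :=
      (Real.continuousAt_rpow_const v (-α) (Or.inl hv0.ne')).sub continuousAt_const
    exact (eventually_gt_nhds hv0).and (hc (Ioi_mem_nhds hp))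
  have hdf : deriv f v = α * (v ^ (-α - 1) / (v ^ (-α) - β)) := (key v hv0 hp).deriv
  have hdfe : deriv f =ᶠ[nhds v]
      (fun x => α * (x ^ (-α - 1) / (x ^ (-α) - β))) := by
    filter_upwards [hmem] with x hx
    exact (key x hx.1 hx.2).deriv
  -- second derivative
  have h1 : HasDerivAt (fun y : ℝ => y ^ (-α - 1)) ((-α - 1) * v ^ (-α - 2)) v := by
    have := Real.hasDerivAt_rpow_const (x := v) (p := -α - 1) (Or.inl hv0.ne')
    convert this using 2
    ring
  have h2 : HasDerivAt (fun y : ℝ => y ^ (-α) - β) (-α * v ^ (-α - 1)) v :=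
    (Real.hasDerivAt_rpow_const (Or.inl hv0.ne')).sub_const β
  have hdiv : HasDerivAt (fun y : ℝ => y ^ (-α - 1) / (y ^ (-α) - β))
      (((-α - 1) * v ^ (-α - 2) * (v ^ (-α) - β) - v ^ (-α - 1) * (-α * v ^ (-α - 1)))
        / (v ^ (-α) - β) ^ 2) v := h1.div h2 hp.ne'
  have hddf : deriv (deriv f) v
      = α * (((-α - 1) * v ^ (-α - 2) * (v ^ (-α) - β) - v ^ (-α - 1) * (-α * v ^ (-α - 1)))
        / (v ^ (-α) - β) ^ 2) := by
    rw [hdfe.deriv_eq]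
    exact (hdiv.const_mul α).deriv
  -- rpow relations
  have hb : v ^ (-α - 1) = v ^ (-α) / v := by
    rw [Real.rpow_sub hv0, Real.rpow_one]
  have hc2 : v ^ (-α - 2) = v ^ (-α) / v ^ 2 := by
    rw [Real.rpow_sub hv0, show ((2:ℝ)) = ((2:ℕ):ℝ) by norm_num, Real.rpow_natCast]
  have hcc : v ^ (-(α + 2)) = v ^ (-α) / v ^ 2 := by
    rw [show (-(α + 2) : ℝ) = -α - 2 by ring, hc2]
  have hv2 : (0:ℝ) < v ^ 2 := by positivity
  rw [hdf, hddf, hb, hc2, hcc]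
  generalize hA : v ^ (-α) = A at hp ha0 ha1 hβa ⊢
  have hpa : A - β ≤ A := by linarith
  have h34 : 3/4 < α := by linarith
  clear key hdfe hdiv hmem hainv h1 h2
  refine ⟨hp, ?_, ?_, by linarith, ?_, ?_, ?_⟩
  · field_simp
    ring
  · have heq : 1 - α * (A / v / (A - β)) * v = ((1 - α) * A - β) / (A - β) := by
      field_simp
      ring
    rw [heq, div_le_iff₀ hp]
    clear heq hdf hddf hβ
    nlinarith [mul_nonneg (by linarith : (0:ℝ) ≤ 1 - α) (by linarith : (0:ℝ) ≤ 1 - A),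
      mul_nonneg hβ0.le (by linarith : (0:ℝ) ≤ 1 - (A - β))]
  · field_simp
    ring
  · have heq : (α * (A / v / (A - β))) ^ 2 - 2 / v * (α * (A / v / (A - β)))
        - α * (((-α - 1) * (A / v ^ 2) * (A - β) - A / v * (-α * (A / v))) / (A - β) ^ 2)
        = α * (α - 1) * (A / v ^ 2) / (A - β) := by
      field_simp
      ring
    rw [heq, div_le_div_iff₀ hp hv2]
    have he2 : α * (α - 1) * (A / v ^ 2) * v ^ 2 = α * (α - 1) * A := by
      field_simp
    rw [he2]
    clear heq he2 hdf hddf hβ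
    have hX : (0:ℝ) ≤ α * A - 3/4 * (A - β) := by
      have := mul_nonneg (by linarith : (0:ℝ) ≤ α - 3/4) ha0.le
      nlinarith
    nlinarith [mul_nonneg (by linarith : (0:ℝ) ≤ 1 - α) hX]
  · have h1 : (3/4 : ℝ) * (α - 1) < 0 := by nlinarith [hα2]
    exact div_neg_of_neg_of_pos h1 hv2
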